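/- Let G be a subgroup of Homeo₊(ℝ) acting freely on ℝ (every nonidentity element is fixed-point free). Then G admits an invariant Radon measure on ℝ. -/

import Mathlib

open Set MeasureTheory
open scoped NNReal

/-- Orientation-preserving homeomorphisms of ℝ, modelled as order-isomorphisms of ℝ
(every order-isomorphism of ℝ is a strictly increasing homeomorphism and conversely). -/
abbrev HomeoR := ℝ ≃o ℝ

/-- The fixed point set of `f`. -/
def FixSet (f : HomeoR) : Set ℝ := {x : ℝ | f x = x}

/-- `f` and `g` are crossed with `f` in the distinguished role: there is an interval
`(a,b)` with endpoints possibly `±∞` such that `Fix(f) ∩ [a,b] = {a,b}` while `g`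
maps `a` or `b` into `(a,b)`. -/
def CrossedAt (f g : HomeoR) : Prop :=
  ∃ a b : EReal, a < b ∧
    ({x : ℝ | a ≤ (x : EReal) ∧ (x : EReal) ≤ b} ∩ FixSet f
      = {x : ℝ | (x : EReal) = a ∨ (x : EReal) = b}) ∧
    (∃ x : ℝ, ((x : EReal) = a ∨ (x : EReal) = b) ∧
      a < (g x : EReal) ∧ (g x : EReal) < b)

/-- Two elements are crossed. -/
def Crossed (f g : HomeoR) : Prop := CrossedAt f g ∨ CrossedAt g f

/-- `μ` is a (nonzero) `G`-invariant Radon measure on ℝ. -/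
def InvariantRadon (G : Subgroup HomeoR) (μ : Measure ℝ) : Prop :=
  μ ≠ 0 ∧ IsFiniteMeasureOnCompacts μ ∧ ∀ g ∈ G, Measure.map (⇑g) μ = μ

/-- `Λ` is a nonempty minimal closed `G`-invariant subset of ℝ. -/
def MinimalSet (G : Subgroup HomeoR) (Λ : Set ℝ) : Prop :=
  Λ.Nonempty ∧ IsClosed Λ ∧ (∀ g ∈ G, ⇑g '' Λ = Λ) ∧
    ∀ Λ' ⊆ Λ, Λ'.Nonempty → IsClosed Λ' → (∀ g ∈ G, ⇑g '' Λ' = Λ') → Λ' = Λ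

section Lemmas
open Filter Topology
variable {G : Subgroup HomeoR}

namespace FAIR

variable {G : Subgroup HomeoR}

/-- From a fixed point, conclude the element is the identity. -/
lemma eq_one_of_fix (hfree : ∀ g ∈ G, g ≠ 1 → FixSet g = ∅) {a : ↥G} {x : ℝ}
    (hx : (a : HomeoR) x = x) : a = 1 := by
  by_contra ha
  have ha' : (a : HomeoR) ≠ 1 := by
    simpa [← OneMemClass.coe_eq_one] using ha
  have h2 := hfree a a.2 ha'
  have : x ∈ FixSet (a : HomeoR) := hx
  rw [h2] at this
  exact this

lemma apply_inj (hfree : ∀ g ∈ G, g ≠ 1 → FixSet g = ∅) {a b : ↥G} {x : ℝ}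
    (h : (a : HomeoR) x = (b : HomeoR) x) : a = b := by
  have : ((b⁻¹ * a : ↥G) : HomeoR) x = x := by
    have : ((b⁻¹ * a : ↥G) : HomeoR) x = ((b : HomeoR).symm) ((a : HomeoR) x) := rfl
    rw [this, h]; exact (b : HomeoR).symm_apply_apply x
  have h1 := eq_one_of_fix hfree this
  rwa [inv_mul_eq_one, eq_comm] at h1

/-- the key comparison lemma: if `a x ≤ b x` somewhere then everywhere. -/
lemma le_ext (hfree : ∀ g ∈ G, g ≠ 1 → FixSet g = ∅) {a b : ↥G} {x : ℝ}
    (h : (a : HomeoR) x ≤ (b : HomeoR) x) (y : ℝ) : (a : HomeoR) y ≤ (b : HomeoR) y := by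
  set c : ↥G := b⁻¹ * a with hc
  have hcz : ∀ z : ℝ, (c : HomeoR) z = (b : HomeoR).symm ((a : HomeoR) z) := fun z => rfl
  have hcx : (c : HomeoR) x ≤ x := by
    rw [hcz]
    calc (b : HomeoR).symm ((a : HomeoR) x) ≤ (b : HomeoR).symm ((b : HomeoR) x) := by
          exact ((b : HomeoR).symm.le_iff_le).mpr h
      _ = x := (b : HomeoR).symm_apply_apply x
  have key : ∀ z : ℝ, (c : HomeoR) z ≤ z := by
    rcases eq_or_ne c 1 with h1 | h1
    · intro z; simp [h1]
    · intro z
      by_contra hz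
      push_neg at hz
      have hcont : Continuous (fun t : ℝ => (c : HomeoR) t - t) :=
        (OrderIso.continuous _).sub continuous_id
      have h0 : (0:ℝ) ∈ uIcc ((fun t : ℝ => (c : HomeoR) t - t) x)
          ((fun t : ℝ => (c : HomeoR) t - t) z) := by
        simp only [mem_uIcc]
        left
        constructor
        · linarith [hcx]
        · linarith [hz]
      obtain ⟨t, _, ht⟩ := intermediate_value_uIcc (hcont.continuousOn (s := uIcc x z)) h0
      have : (c : HomeoR) t = t := by
        have := ht
        simp only at this
        linarith
      exact h1 (eq_one_of_fix hfree this)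
  have : (a : HomeoR) y = (b : HomeoR) ((c : HomeoR) y) := by
    rw [hcz]; exact ((b : HomeoR).apply_symm_apply _).symm
  rw [this]
  exact (b : HomeoR).le_iff_le.mpr (key y) |>.trans (le_refl _) |>.trans (le_refl _)

lemma lt_ext (hfree : ∀ g ∈ G, g ≠ 1 → FixSet g = ∅) {a b : ↥G} {x : ℝ}
    (h : (a : HomeoR) x < (b : HomeoR) x) (y : ℝ) : (a : HomeoR) y < (b : HomeoR) y := by
  rcases lt_or_eq_of_le (le_ext hfree h.le y) with h' | h'
  · exact h'
  · exact absurd (apply_inj hfree h') (by rintro rfl; exact lt_irrefl _ h)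

end FAIR


namespace FAIR

/-- if `f` moves every point to the right, its orbit is unbounded above. -/
lemma arch (hfree : ∀ g ∈ G, g ≠ 1 → FixSet g = ∅) {f : ↥G}
    (hf : ∀ z : ℝ, z < (f : HomeoR) z) (x y : ℝ) :
    ∃ n : ℕ, y < ((f ^ n : ↥G) : HomeoR) x := by
  by_contra hcon
  push_neg at hcon
  set S : Set ℝ := range (fun n : ℕ => ((f ^ n : ↥G) : HomeoR) x) with hS
  have hne : S.Nonempty := ⟨x, 0, by simp⟩
  have hbdd : BddAbove S := ⟨y, by rintro _ ⟨n, rfl⟩; exact hcon n⟩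
  set L := sSup S with hL
  have hmapsto : ∀ s ∈ S, (f : HomeoR) s ∈ S := by
    rintro _ ⟨n, rfl⟩
    refine ⟨n + 1, ?_⟩
    show ((f ^ (n+1) : ↥G) : HomeoR) x = _
    rw [pow_succ']
    rfl
  have h1 : (f : HomeoR) L = sSup ((f : HomeoR) '' S) := OrderIso.map_csSup' _ hne hbdd
  have h2 : (f : HomeoR) L ≤ L := by
    rw [h1]
    apply csSup_le (hne.image _)
    rintro _ ⟨s, hs, rfl⟩
    exact le_csSup hbdd (hmapsto s hs)
  exact absurd h2 (not_le.mpr (hf L))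

lemma pow_nonneg (hfree : ∀ g ∈ G, g ≠ 1 → FixSet g = ∅) {d : ↥G}
    (hd : ∀ z : ℝ, z < (d : HomeoR) z) (n : ℕ) : (0:ℝ) ≤ ((d ^ n : ↥G) : HomeoR) 0 := by
  induction n with
  | zero => simp
  | succ n ih =>
    have : ((d ^ (n+1) : ↥G) : HomeoR) 0 = (d : HomeoR) (((d ^ n : ↥G) : HomeoR) 0) := by
      rw [pow_succ']; rfl
    rw [this]
    exact ih.trans (hd _).le

lemma zpow_mono (hfree : ∀ g ∈ G, g ≠ 1 → FixSet g = ∅) {d : ↥G}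
    (hd : ∀ z : ℝ, z < (d : HomeoR) z) {k l : ℤ} (h : k ≤ l) :
    ((d ^ k : ↥G) : HomeoR) 0 ≤ ((d ^ l : ↥G) : HomeoR) 0 := by
  have hdl : d ^ l = d ^ k * d ^ (l - k) := by
    rw [← zpow_add]; ring_nf
  have h2 : (0:ℝ) ≤ ((d ^ (l - k) : ↥G) : HomeoR) 0 := by
    have : d ^ (l - k) = d ^ ((l - k).toNat) := by
      rw [← zpow_natCast, Int.toNat_of_nonneg (by omega)]
    rw [this]; exact pow_nonneg hfree hd _
  calc ((d ^ k : ↥G) : HomeoR) 0 ≤ ((d ^ k : ↥G) : HomeoR) (((d ^ (l-k) : ↥G) : HomeoR) 0) :=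
        ((d ^ k : ↥G) : HomeoR).le_iff_le.mpr h2
    _ = ((d ^ l : ↥G) : HomeoR) 0 := by rw [hdl]; rfl

lemma zpow_strictMono (hfree : ∀ g ∈ G, g ≠ 1 → FixSet g = ∅) {d : ↥G}
    (hd : ∀ z : ℝ, z < (d : HomeoR) z) {k l : ℤ} (h : k < l) :
    ((d ^ k : ↥G) : HomeoR) 0 < ((d ^ l : ↥G) : HomeoR) 0 := by
  have h1 : ((d ^ k : ↥G) : HomeoR) 0 < ((d ^ (k+1) : ↥G) : HomeoR) 0 := by
    have : d ^ (k+1) = d * d ^ k := by rw [add_comm, zpow_add, zpow_one]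
    rw [this]
    exact hd _
  exact h1.trans_le (zpow_mono hfree hd (by omega))

/-- greatest `m` with `d^m 0 ≤ g 0`. -/
lemma maxpow (hfree : ∀ g ∈ G, g ≠ 1 → FixSet g = ∅) {d : ↥G}
    (hd : ∀ z : ℝ, z < (d : HomeoR) z) (g : ↥G) :
    ∃ m : ℤ, ((d ^ m : ↥G) : HomeoR) 0 ≤ (g : HomeoR) 0 ∧
      (g : HomeoR) 0 < ((d ^ (m+1) : ↥G) : HomeoR) 0 := by
  have hinh : ∃ m : ℤ, ((d ^ m : ↥G) : HomeoR) 0 ≤ (g : HomeoR) 0 := by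
    obtain ⟨n, hn⟩ := arch hfree hd ((g : HomeoR) 0) 0
    refine ⟨-(n:ℤ), ?_⟩
    have key : ((d ^ n : ↥G) : HomeoR) (((d ^ (-(n:ℤ)) : ↥G) : HomeoR) 0) = 0 := by
      have : (d ^ n : ↥G) * d ^ (-(n:ℤ)) = 1 := by
        rw [← zpow_natCast]; rw [← zpow_add]; simp
      calc ((d ^ n : ↥G) : HomeoR) (((d ^ (-(n:ℤ)) : ↥G) : HomeoR) 0)
          = (((d ^ n : ↥G) * d ^ (-(n:ℤ)) : ↥G) : HomeoR) 0 := rfl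
        _ = 0 := by rw [this]; rfl
    have := ((d ^ n : ↥G) : HomeoR).le_iff_le (x := ((d ^ (-(n:ℤ)) : ↥G) : HomeoR) 0)
        (y := (g : HomeoR) 0)
    rw [← this, key]
    exact hn.le
  have hbdd : ∃ b : ℤ, ∀ m : ℤ, ((d ^ m : ↥G) : HomeoR) 0 ≤ (g : HomeoR) 0 → m ≤ b := by
    obtain ⟨n, hn⟩ := arch hfree hd 0 ((g : HomeoR) 0)
    refine ⟨(n:ℤ), fun m hm => ?_⟩
    by_contra hmn
    push_neg at hmn
    have : ((d ^ (n:ℤ) : ↥G) : HomeoR) 0 ≤ ((d ^ m : ↥G) : HomeoR) 0 :=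
      zpow_mono hfree hd hmn.le
    rw [zpow_natCast] at this
    linarith
  obtain ⟨m, hm, hgreatest⟩ := Int.exists_greatest_of_bdd hbdd hinh
  refine ⟨m, hm, ?_⟩
  by_contra hcon
  push_neg at hcon
  exact absurd (hgreatest _ hcon) (by omega)

end FAIR


namespace FAIR

lemma pos_of_one_lt (hfree : ∀ g ∈ G, g ≠ 1 → FixSet g = ∅) {d : ↥G}
    (hd : 0 < (d : HomeoR) 0) (z : ℝ) : z < (d : HomeoR) z := by
  have h1 : ((1 : ↥G) : HomeoR) 0 < (d : HomeoR) 0 := by simpa using hd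
  have := lt_ext hfree h1 z
  simpa using this

/-- no commutator can be `> 1`. -/
lemma commutator_not_pos (hfree : ∀ g ∈ G, g ≠ 1 → FixSet g = ∅) (a b : ↥G)
    (hc : 0 < ((a * b * a⁻¹ * b⁻¹ : ↥G) : HomeoR) 0) : False := by
  classical
  set c : ↥G := a * b * a⁻¹ * b⁻¹ with hcdef
  rcases Classical.em (∃ s : ↥G, 0 < (s : HomeoR) 0 ∧
      ∀ t : ↥G, 0 < (t : HomeoR) 0 → (s : HomeoR) 0 ≤ (t : HomeoR) 0) with hmin | hmin
  · -- discrete case : G is cyclic generated by s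
    obtain ⟨s, hs0, hsmin⟩ := hmin
    have hs : ∀ z : ℝ, z < (s : HomeoR) z := pos_of_one_lt hfree hs0
    have hcyc : ∀ g : ↥G, ∃ m : ℤ, g = s ^ m := by
      intro g
      obtain ⟨m, hm1, hm2⟩ := maxpow hfree hs g
      set t : ↥G := (s ^ m)⁻¹ * g with htdef
      have ht : (t : HomeoR) 0 = ((s ^ m : ↥G) : HomeoR).symm ((g : HomeoR) 0) := rfl
      have ht0 : 0 ≤ (t : HomeoR) 0 := by
        rw [ht]
        have := ((s ^ m : ↥G) : HomeoR).symm.le_iff_le.mpr hm1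
        simpa using this
      have hts : (t : HomeoR) 0 < (s : HomeoR) 0 := by
        rw [ht]
        have h2 := ((s ^ m : ↥G) : HomeoR).symm.le_iff_le.mpr hm2.le
        have hne : ((s ^ m : ↥G) : HomeoR).symm ((g : HomeoR) 0)
            ≠ ((s ^ m : ↥G) : HomeoR).symm (((s ^ (m+1) : ↥G) : HomeoR) 0) := by
          intro h
          have := ((s ^ m : ↥G) : HomeoR).symm.injective h
          linarith [hm2, this]
        have heq : ((s ^ m : ↥G) : HomeoR).symm (((s ^ (m+1) : ↥G) : HomeoR) 0)
            = (s : HomeoR) 0 := by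
          have hgrp : (s ^ m)⁻¹ * s ^ (m+1) = s := by
            rw [← zpow_neg, ← zpow_add]; ring_nf; exact zpow_one s
          calc ((s ^ m : ↥G) : HomeoR).symm (((s ^ (m+1) : ↥G) : HomeoR) 0)
              = (((s ^ m)⁻¹ * s ^ (m+1) : ↥G) : HomeoR) 0 := rfl
            _ = (s : HomeoR) 0 := by rw [hgrp]
        rw [← heq]
        exact lt_of_le_of_ne h2 hne
      rcases eq_or_lt_of_le ht0 with h0 | h0
      · have : t = 1 := by
          refine apply_inj hfree (x := 0) ?_
          simp [← h0]
        refine ⟨m, ?_⟩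
        rw [htdef] at this
        rw [inv_mul_eq_one] at this
        exact this.symm
      · exact absurd (hsmin t h0) (not_le.mpr hts)
    obtain ⟨p, hp⟩ := hcyc a
    obtain ⟨q, hq⟩ := hcyc b
    have : c = 1 := by
      rw [hcdef, hp, hq, ← zpow_neg, ← zpow_neg, ← zpow_add, ← zpow_add, ← zpow_add]
      ring_nf
      exact zpow_zero s
    rw [this] at hc
    simp at hc
  · -- dense case : Hölder's trick
    push_neg at hmin
    obtain ⟨p, hp0, hpc⟩ := hmin c hc
    replace hpc : (p : HomeoR) 0 < (c : HomeoR) 0 := hpc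
    set q : ↥G := p⁻¹ * c with hqdef
    have hq0 : 0 < (q : HomeoR) 0 := by
      have : (q : HomeoR) 0 = (p : HomeoR).symm ((c : HomeoR) 0) := rfl
      rw [this]
      have := (p : HomeoR).symm.lt_iff_lt.mpr hpc
      simpa using this
    set d : ↥G := if (p : HomeoR) 0 ≤ (q : HomeoR) 0 then p else q with hddef
    have hd0 : 0 < (d : HomeoR) 0 := by
      rw [hddef]; split <;> assumption
    have hdp : (d : HomeoR) 0 ≤ (p : HomeoR) 0 := by
      rw [hddef]; split
      · exact le_rfl
      · next h => exact (not_le.mp h).le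
    have hdq : (d : HomeoR) 0 ≤ (q : HomeoR) 0 := by
      rw [hddef]; split
      · next h => exact h
      · exact le_rfl
    have hd : ∀ z : ℝ, z < (d : HomeoR) z := pos_of_one_lt hfree hd0
    -- d * d ≤ c at 0
    have hdd : ((d * d : ↥G) : HomeoR) 0 ≤ (c : HomeoR) 0 := by
      have h1 : ((d * d : ↥G) : HomeoR) 0 = (d : HomeoR) ((d : HomeoR) 0) := rfl
      have h2 : (d : HomeoR) ((d : HomeoR) 0) ≤ (p : HomeoR) ((d : HomeoR) 0) :=
        le_ext hfree hdp _
      have h3 : (p : HomeoR) ((d : HomeoR) 0) ≤ (p : HomeoR) ((q : HomeoR) 0) :=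
        (p : HomeoR).le_iff_le.mpr hdq
      have h4 : (p : HomeoR) ((q : HomeoR) 0) = (c : HomeoR) 0 := by
        have : p * q = c := by rw [hqdef]; group
        calc (p : HomeoR) ((q : HomeoR) 0) = ((p * q : ↥G) : HomeoR) 0 := rfl
          _ = (c : HomeoR) 0 := by rw [this]
      rw [h1]; linarith
    -- bound a and b between powers of d
    obtain ⟨m, hm1, hm2⟩ := maxpow hfree hd a
    obtain ⟨n, hn1, hn2⟩ := maxpow hfree hd b
    have Pa : ∀ y : ℝ, ((d ^ m : ↥G) : HomeoR) y ≤ (a : HomeoR) y := le_ext hfree hm1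
    have Pa' : ∀ y : ℝ, (a : HomeoR) y < ((d ^ (m+1) : ↥G) : HomeoR) y := lt_ext hfree hm2
    have Pb : ∀ y : ℝ, ((d ^ n : ↥G) : HomeoR) y ≤ (b : HomeoR) y := le_ext hfree hn1
    have Pb' : ∀ y : ℝ, (b : HomeoR) y < ((d ^ (n+1) : ↥G) : HomeoR) y := lt_ext hfree hn2
    -- inverse bounds
    have Ia : ∀ y : ℝ, (a : HomeoR).symm y ≤ ((d ^ (-m) : ↥G) : HomeoR) y := by
      intro y
      have h1 : ((d ^ m : ↥G) : HomeoR) ((a : HomeoR).symm y) ≤ y := by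
        have := Pa ((a : HomeoR).symm y)
        rwa [(a : HomeoR).apply_symm_apply] at this
      have h2 := ((d ^ (-m) : ↥G) : HomeoR).le_iff_le.mpr h1
      have h3 : ((d ^ (-m) : ↥G) : HomeoR) (((d ^ m : ↥G) : HomeoR) ((a : HomeoR).symm y))
          = (a : HomeoR).symm y := by
        have hgrp : (d ^ (-m) : ↥G) * d ^ m = 1 := by rw [← zpow_add]; simp
        calc ((d ^ (-m) : ↥G) : HomeoR) (((d ^ m : ↥G) : HomeoR) ((a : HomeoR).symm y))
            = (((d ^ (-m)) * d ^ m : ↥G) : HomeoR) ((a : HomeoR).symm y) := rfl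
          _ = (a : HomeoR).symm y := by rw [hgrp]; rfl
      rwa [h3] at h2
    have Ib : ∀ y : ℝ, (b : HomeoR).symm y ≤ ((d ^ (-n) : ↥G) : HomeoR) y := by
      intro y
      have h1 : ((d ^ n : ↥G) : HomeoR) ((b : HomeoR).symm y) ≤ y := by
        have := Pb ((b : HomeoR).symm y)
        rwa [(b : HomeoR).apply_symm_apply] at this
      have h2 := ((d ^ (-n) : ↥G) : HomeoR).le_iff_le.mpr h1
      have h3 : ((d ^ (-n) : ↥G) : HomeoR) (((d ^ n : ↥G) : HomeoR) ((b : HomeoR).symm y))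
          = (b : HomeoR).symm y := by
        have hgrp : (d ^ (-n) : ↥G) * d ^ n = 1 := by rw [← zpow_add]; simp
        calc ((d ^ (-n) : ↥G) : HomeoR) (((d ^ n : ↥G) : HomeoR) ((b : HomeoR).symm y))
            = (((d ^ (-n)) * d ^ n : ↥G) : HomeoR) ((b : HomeoR).symm y) := rfl
          _ = (b : HomeoR).symm y := by rw [hgrp]; rfl
      rwa [h3] at h2
    -- now the chain computation
    have hc0 : (c : HomeoR) 0
        = (a : HomeoR) ((b : HomeoR) ((a : HomeoR).symm ((b : HomeoR).symm 0))) := rfl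
    set y0 : ℝ := (b : HomeoR).symm 0 with hy0
    set y1 : ℝ := (a : HomeoR).symm y0 with hy1
    have s1 : y1 ≤ ((d ^ (-m) : ↥G) : HomeoR) (((d ^ (-n) : ↥G) : HomeoR) 0) := by
      calc y1 ≤ ((d ^ (-m) : ↥G) : HomeoR) y0 := Ia y0
        _ ≤ ((d ^ (-m) : ↥G) : HomeoR) (((d ^ (-n) : ↥G) : HomeoR) 0) :=
          ((d ^ (-m) : ↥G) : HomeoR).le_iff_le.mpr (Ib 0)
    have s1' : y1 ≤ ((d ^ (-m - n) : ↥G) : HomeoR) 0 := by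
      have hgrp : (d ^ (-m) : ↥G) * d ^ (-n) = d ^ (-m - n) := by rw [← zpow_add]; ring_nf
      calc y1 ≤ ((d ^ (-m) : ↥G) : HomeoR) (((d ^ (-n) : ↥G) : HomeoR) 0) := s1
        _ = (((d ^ (-m)) * d ^ (-n) : ↥G) : HomeoR) 0 := rfl
        _ = ((d ^ (-m - n) : ↥G) : HomeoR) 0 := by rw [hgrp]
    have s2 : (b : HomeoR) y1 < ((d ^ (1 - m) : ↥G) : HomeoR) 0 := by
      have hgrp : (d ^ (n+1) : ↥G) * d ^ (-m - n) = d ^ (1 - m) := by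
        rw [← zpow_add]; ring_nf
      calc (b : HomeoR) y1 < ((d ^ (n+1) : ↥G) : HomeoR) y1 := Pb' y1
        _ ≤ ((d ^ (n+1) : ↥G) : HomeoR) (((d ^ (-m - n) : ↥G) : HomeoR) 0) :=
          ((d ^ (n+1) : ↥G) : HomeoR).le_iff_le.mpr s1'
        _ = (((d ^ (n+1)) * d ^ (-m - n) : ↥G) : HomeoR) 0 := rfl
        _ = ((d ^ (1 - m) : ↥G) : HomeoR) 0 := by rw [hgrp]
    have s3 : (c : HomeoR) 0 < ((d * d : ↥G) : HomeoR) 0 := by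
      have hgrp : (d ^ (m+1) : ↥G) * d ^ (1 - m) = d * d := by
        rw [← zpow_add]
        have : m + 1 + (1 - m) = 2 := by ring
        rw [this]
        rw [zpow_two]
      calc (c : HomeoR) 0 = (a : HomeoR) ((b : HomeoR) y1) := hc0
        _ < ((d ^ (m+1) : ↥G) : HomeoR) ((b : HomeoR) y1) := Pa' _
        _ < ((d ^ (m+1) : ↥G) : HomeoR) (((d ^ (1 - m) : ↥G) : HomeoR) 0) :=
          ((d ^ (m+1) : ↥G) : HomeoR).lt_iff_lt.mpr s2
        _ = (((d ^ (m+1)) * d ^ (1 - m) : ↥G) : HomeoR) 0 := rfl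
        _ = ((d * d : ↥G) : HomeoR) 0 := by rw [hgrp]
    linarith

/-- Hölder's theorem : the group is commutative. -/
lemma comm (hfree : ∀ g ∈ G, g ≠ 1 → FixSet g = ∅) (a b : ↥G) : a * b = b * a := by
  by_contra h
  set c : ↥G := a * b * a⁻¹ * b⁻¹ with hcdef
  have hc1 : c ≠ 1 := by
    rw [hcdef]
    intro h1
    rw [mul_inv_eq_one] at h1
    rw [mul_inv_eq_iff_eq_mul] at h1
    exact h h1
  have hcne : ((c : ↥G) : HomeoR) 0 ≠ 0 := by
    intro h0
    exact hc1 (eq_one_of_fix hfree (x := 0) (by simpa using h0))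
  rcases lt_or_gt_of_ne hcne with hneg | hpos
  · -- then the commutator of (b, a) is positive
    have hinv : (b * a * b⁻¹ * a⁻¹ : ↥G) = c⁻¹ := by rw [hcdef]; group
    have : 0 < ((c⁻¹ : ↥G) : HomeoR) 0 := by
      have h1 : ((c⁻¹ : ↥G) : HomeoR) ((c : HomeoR) 0) = 0 := by
        calc ((c⁻¹ : ↥G) : HomeoR) ((c : HomeoR) 0) = ((c⁻¹ * c : ↥G) : HomeoR) 0 := rfl
          _ = 0 := by rw [inv_mul_cancel]; rfl
      have h2 : ((c⁻¹ : ↥G) : HomeoR) ((c : HomeoR) 0) < ((c⁻¹ : ↥G) : HomeoR) 0 :=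
        ((c⁻¹ : ↥G) : HomeoR).lt_iff_lt.mpr hneg
      linarith
    exact commutator_not_pos hfree b a (by rw [hinv]; exact this)
  · exact commutator_not_pos hfree a b hpos

end FAIR

end Lemmas

open Set MeasureTheory Filter Topology in
theorem free_action_invariant_radon (G : Subgroup HomeoR)
    (hfree : ∀ g ∈ G, g ≠ 1 → FixSet g = ∅) :
    ∃ μ : Measure ℝ, InvariantRadon G μ := by
  classical
  rcases Classical.em (∀ g ∈ G, g = 1) with hG | hG
  · -- trivial group : Lebesgue measure works
    refine ⟨volume, ?_, inferInstance, ?_⟩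
    · intro h
      have h1 : (volume : Measure ℝ) (Ioc (0:ℝ) 1) = 1 := by simp
      rw [h] at h1
      simp at h1
    · intro g hg
      rw [hG g hg]
      have : ⇑(1 : HomeoR) = id := rfl
      rw [this, Measure.map_id]
  · push_neg at hG
    obtain ⟨g0, hg0G, hg0⟩ := hG
    -- find f ∈ G with f 0 > 0
    obtain ⟨f, hf0⟩ : ∃ f : ↥G, 0 < (f : HomeoR) 0 := by
      set a0 : ↥G := ⟨g0, hg0G⟩ with ha0def
      have ha0 : (a0 : HomeoR) 0 ≠ 0 := by
        intro h
        exact hg0 (Subtype.ext_iff.mp (FAIR.eq_one_of_fix hfree (a := a0) h))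
      rcases lt_or_gt_of_ne ha0 with hneg | hpos
      · refine ⟨a0⁻¹, ?_⟩
        have h1 : ((a0⁻¹ : ↥G) : HomeoR) ((a0 : HomeoR) 0) = 0 := by
          calc ((a0⁻¹ : ↥G) : HomeoR) ((a0 : HomeoR) 0) = ((a0⁻¹ * a0 : ↥G) : HomeoR) 0 := rfl
            _ = 0 := by rw [inv_mul_cancel]; rfl
        have h2 := ((a0⁻¹ : ↥G) : HomeoR).lt_iff_lt.mpr hneg
        rw [h1] at h2
        exact h2
      · exact ⟨a0, hpos⟩
    have hf : ∀ z : ℝ, z < (f : HomeoR) z := FAIR.pos_of_one_lt hfree hf0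
    -- the "integer part" function A
    obtain ⟨A, hA1, hA2⟩ : ∃ A : ↥G → ℤ, (∀ g : ↥G, ((f ^ A g : ↥G) : HomeoR) 0 ≤ (g : HomeoR) 0) ∧
        (∀ g : ↥G, (g : HomeoR) 0 < ((f ^ (A g + 1) : ↥G) : HomeoR) 0) := by
      choose A h1 h2 using fun g => FAIR.maxpow hfree hf g
      exact ⟨A, h1, h2⟩
    have Ale : ∀ (g : ↥G) (k : ℤ), ((f ^ k : ↥G) : HomeoR) 0 ≤ (g : HomeoR) 0 → k ≤ A g := by
      intro g k hk
      by_contra hlt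
      push_neg at hlt
      have := FAIR.zpow_mono hfree hf (k := A g + 1) (l := k) (by omega)
      linarith [hA2 g]
    have Alt : ∀ (g : ↥G) (k : ℤ), (g : HomeoR) 0 < ((f ^ k : ↥G) : HomeoR) 0 → A g < k := by
      intro g k hk
      by_contra hle
      push_neg at hle
      have := FAIR.zpow_mono hfree hf (k := k) (l := A g) hle
      linarith [hA1 g]
    have Amono : ∀ g h : ↥G, (g : HomeoR) 0 ≤ (h : HomeoR) 0 → A g ≤ A h :=
      fun g h hgh => Ale h (A g) ((hA1 g).trans hgh)
    have Azero : A 1 = 0 := by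
      have h1 : (0:ℤ) ≤ A 1 := Ale 1 0 (by simp)
      have h2 : A 1 < 1 := Alt 1 1 (by simpa using hf0)
      omega
    have Apowf : ∀ k : ℤ, A (f ^ k) = k := by
      intro k
      have h1 : k ≤ A (f ^ k) := Ale (f ^ k) k le_rfl
      have h2 : A (f ^ k) < k + 1 := Alt (f ^ k) (k + 1) (FAIR.zpow_strictMono hfree hf (by omega))
      omega
    have superadd : ∀ g h : ↥G, A g + A h ≤ A (g * h) := by
      intro g h
      apply Ale
      have e1 : ((f ^ (A g + A h) : ↥G) : HomeoR) 0
          = ((f ^ A g : ↥G) : HomeoR) (((f ^ A h : ↥G) : HomeoR) 0) := by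
        rw [zpow_add]; rfl
      have e2 : ((f ^ A g : ↥G) : HomeoR) (((f ^ A h : ↥G) : HomeoR) 0)
          ≤ ((f ^ A g : ↥G) : HomeoR) ((h : HomeoR) 0) :=
        ((f ^ A g : ↥G) : HomeoR).le_iff_le.mpr (hA1 h)
      have e3 : ((f ^ A g : ↥G) : HomeoR) ((h : HomeoR) 0) ≤ (g : HomeoR) ((h : HomeoR) 0) :=
        FAIR.le_ext hfree (hA1 g) _
      have e4 : (g : HomeoR) ((h : HomeoR) 0) = ((g * h : ↥G) : HomeoR) 0 := rfl
      rw [e1, ← e4]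
      exact e2.trans e3
    have subadd : ∀ g h : ↥G, A (g * h) < A g + A h + 2 := by
      intro g h
      apply Alt
      have e1 : ((g * h : ↥G) : HomeoR) 0 = (g : HomeoR) ((h : HomeoR) 0) := rfl
      have e2 : (g : HomeoR) ((h : HomeoR) 0) < ((f ^ (A g + 1) : ↥G) : HomeoR) ((h : HomeoR) 0) :=
        FAIR.lt_ext hfree (hA2 g) _
      have e3 : ((f ^ (A g + 1) : ↥G) : HomeoR) ((h : HomeoR) 0)
          < ((f ^ (A g + 1) : ↥G) : HomeoR) (((f ^ (A h + 1) : ↥G) : HomeoR) 0) :=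
        ((f ^ (A g + 1) : ↥G) : HomeoR).lt_iff_lt.mpr (hA2 h)
      have e4 : ((f ^ (A g + 1) : ↥G) : HomeoR) (((f ^ (A h + 1) : ↥G) : HomeoR) 0)
          = ((f ^ (A g + A h + 2) : ↥G) : HomeoR) 0 := by
        have : (f ^ (A g + 1) : ↥G) * f ^ (A h + 1) = f ^ (A g + A h + 2) := by
          rw [← zpow_add]; ring_nf
        calc ((f ^ (A g + 1) : ↥G) : HomeoR) (((f ^ (A h + 1) : ↥G) : HomeoR) 0)
            = (((f ^ (A g + 1)) * f ^ (A h + 1) : ↥G) : HomeoR) 0 := rfl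
          _ = ((f ^ (A g + A h + 2) : ↥G) : HomeoR) 0 := by rw [this]
      rw [e1, ← e4]
      exact e2.trans e3
    -- ℕ-power bounds
    have npow_superadd : ∀ (g : ↥G) (n : ℕ), (n : ℤ) * A g ≤ A (g ^ n) := by
      intro g n
      induction n with
      | zero => simp [Azero]
      | succ n ih =>
        have h1 := superadd (g ^ n) g
        rw [← pow_succ] at h1
        push_cast
        push_cast at ih
        linarith
    -- the translation number
    have hsub : ∀ g : ↥G, Subadditive (fun n : ℕ => (A (g ^ n) : ℝ) + 1) := by
      intro g m n
      have h1 : A (g ^ (m + n)) ≤ A (g ^ m) + A (g ^ n) + 1 := by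
        have := subadd (g ^ m) (g ^ n)
        rw [← pow_add] at this
        omega
      have h2 : ((A (g ^ (m + n)) : ℤ) : ℝ) ≤ ((A (g ^ m) + A (g ^ n) + 1 : ℤ) : ℝ) :=
        Int.cast_le.mpr h1
      push_cast at h2 ⊢
      linarith
    have hbddb : ∀ g : ↥G, BddBelow (range fun n : ℕ => ((A (g ^ n) : ℝ) + 1) / n) := by
      intro g
      refine ⟨min (A g : ℝ) 0, ?_⟩
      rintro _ ⟨n, rfl⟩
      rcases Nat.eq_zero_or_pos n with rfl | hn
      · simp
      · have h1 : ((n : ℝ) * (A g : ℝ)) ≤ (A (g ^ n) : ℝ) := by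
          have h2 : (((n : ℤ) * A g : ℤ) : ℝ) ≤ ((A (g ^ n) : ℤ) : ℝ) :=
            Int.cast_le.mpr (npow_superadd g n)
          push_cast at h2
          linarith
        have hn' : (0:ℝ) < n := by positivity
        rw [le_div_iff₀ hn']
        calc min (A g : ℝ) 0 * n ≤ (A g : ℝ) * n :=
              mul_le_mul_of_nonneg_right (min_le_left _ _) hn'.le
          _ ≤ (A (g ^ n) : ℝ) := by linarith [h1]
          _ ≤ (A (g ^ n) : ℝ) + 1 := by linarith
    set T : ↥G → ℝ := fun g => (hsub g).lim with hTdef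
    have htend : ∀ g : ↥G, Tendsto (fun n : ℕ => (A (g ^ n) : ℝ) / n) atTop (𝓝 (T g)) := by
      intro g
      have h0 := (hsub g).tendsto_lim (hbddb g)
      have h1 : Tendsto (fun n : ℕ => 1 / (n : ℝ)) atTop (𝓝 0) := tendsto_one_div_atTop_nhds_zero_nat
      have heq : (fun n : ℕ => (A (g ^ n) : ℝ) / n)
          = fun n : ℕ => ((A (g ^ n) : ℝ) + 1) / n - 1 / n := by
        funext n
        rw [add_div]
        ring
      rw [heq]
      simpa using h0.sub h1
    have Tone : T 1 = 0 := by
      have h1 : Tendsto (fun n : ℕ => (A ((1:↥G) ^ n) : ℝ) / n) atTop (𝓝 0) := by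
        have : (fun n : ℕ => (A ((1:↥G) ^ n) : ℝ) / n) = fun _ => (0:ℝ) := by
          funext n; rw [one_pow, Azero]; simp
        rw [this]
        exact tendsto_const_nhds
      exact tendsto_nhds_unique (htend 1) h1
    have Tf : T f = 1 := by
      have h1 : Tendsto (fun n : ℕ => (A (f ^ n) : ℝ) / n) atTop (𝓝 1) := by
        apply tendsto_const_nhds.congr'
        filter_upwards [eventually_ge_atTop 1] with n hn
        have hA : A (f ^ n) = n := by
          have : (f : ↥G) ^ n = f ^ (n : ℤ) := (zpow_natCast f n).symm
          rw [this, Apowf]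
        rw [hA]
        have : (n : ℝ) ≠ 0 := by positivity
        field_simp
        norm_cast
      exact tendsto_nhds_unique (htend f) h1
    have Tadd : ∀ g h : ↥G, T (g * h) = T g + T h := by
      intro g h
      have hcomm : Commute g h := FAIR.comm hfree g h
      have hpow : ∀ n : ℕ, (g * h) ^ n = g ^ n * h ^ n := fun n => hcomm.mul_pow n
      have hlow : T g + T h ≤ T (g * h) := by
        refine le_of_tendsto_of_tendsto ((htend g).add (htend h)) (htend (g * h)) ?_
        filter_upwards [eventually_ge_atTop 1] with n hn
        have h1 : A (g ^ n) + A (h ^ n) ≤ A ((g * h) ^ n) := by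
          rw [hpow n]; exact superadd _ _
        have hn' : (0:ℝ) < n := by positivity
        rw [← add_div]
        refine (div_le_div_iff_of_pos_right hn').mpr ?_
        have h2 : ((A (g ^ n) + A (h ^ n) : ℤ) : ℝ) ≤ ((A ((g * h) ^ n) : ℤ) : ℝ) :=
          Int.cast_le.mpr h1
        push_cast at h2 ⊢
        linarith
      have hhigh : T (g * h) ≤ T g + T h := by
        have haux : Tendsto (fun n : ℕ => (A (g ^ n) : ℝ) / n + (A (h ^ n) : ℝ) / n + 1 / n)
            atTop (𝓝 (T g + T h)) := by
          have := ((htend g).add (htend h)).add tendsto_one_div_atTop_nhds_zero_nat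
          simpa using this
        refine le_of_tendsto_of_tendsto (htend (g * h)) haux ?_
        filter_upwards [eventually_ge_atTop 1] with n hn
        have h1 : A ((g * h) ^ n) ≤ A (g ^ n) + A (h ^ n) + 1 := by
          rw [hpow n]
          have := subadd (g ^ n) (h ^ n)
          omega
        have hn' : (0:ℝ) < n := by positivity
        rw [← add_div, ← add_div]
        refine (div_le_div_iff_of_pos_right hn').mpr ?_
        have h2 : ((A ((g * h) ^ n) : ℤ) : ℝ) ≤ ((A (g ^ n) + A (h ^ n) + 1 : ℤ) : ℝ) :=
          Int.cast_le.mpr h1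
        push_cast at h2 ⊢
        linarith
      linarith
    have Tmono : ∀ g h : ↥G, (g : HomeoR) 0 ≤ (h : HomeoR) 0 → T g ≤ T h := by
      intro g h hgh
      have hp : ∀ y : ℝ, (g : HomeoR) y ≤ (h : HomeoR) y := FAIR.le_ext hfree hgh
      have hpow0 : ∀ n : ℕ, ((g ^ n : ↥G) : HomeoR) 0 ≤ ((h ^ n : ↥G) : HomeoR) 0 := by
        intro n
        induction n with
        | zero => simp
        | succ n ih =>
          have e1 : ((g ^ (n+1) : ↥G) : HomeoR) 0 = (g : HomeoR) (((g ^ n : ↥G) : HomeoR) 0) := by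
            rw [pow_succ']; rfl
          have e2 : ((h ^ (n+1) : ↥G) : HomeoR) 0 = (h : HomeoR) (((h ^ n : ↥G) : HomeoR) 0) := by
            rw [pow_succ']; rfl
          rw [e1, e2]
          calc (g : HomeoR) (((g ^ n : ↥G) : HomeoR) 0)
              ≤ (g : HomeoR) (((h ^ n : ↥G) : HomeoR) 0) := (g : HomeoR).le_iff_le.mpr ih
            _ ≤ (h : HomeoR) (((h ^ n : ↥G) : HomeoR) 0) := hp _
      refine le_of_tendsto_of_tendsto (htend g) (htend h) ?_
      filter_upwards [eventually_ge_atTop 1] with n hn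
      have h1 : A (g ^ n) ≤ A (h ^ n) := Amono _ _ (hpow0 n)
      have hn' : (0:ℝ) < n := by positivity
      refine (div_le_div_iff_of_pos_right hn').mpr ?_
      exact_mod_cast h1
    have Tfn : ∀ n : ℕ, T (f ^ n) = n := by
      intro n
      induction n with
      | zero => simpa using Tone
      | succ n ih =>
        rw [pow_succ, Tadd, ih, Tf]
        push_cast
        ring
    -- the monotone function F
    set F : ℝ → ℝ := fun x => sSup (T '' {g : ↥G | (g : HomeoR) 0 ≤ x}) with hFdef
    have hsetne : ∀ x : ℝ, ({g : ↥G | (g : HomeoR) 0 ≤ x}).Nonempty := by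
      intro x
      obtain ⟨n, hn⟩ := FAIR.arch hfree hf x 0
      refine ⟨(f ^ n)⁻¹, ?_⟩
      show (((f ^ n)⁻¹ : ↥G) : HomeoR) 0 ≤ x
      have h1 : ((f ^ n : ↥G) : HomeoR) ((((f ^ n)⁻¹ : ↥G) : HomeoR) 0) = 0 := by
        calc ((f ^ n : ↥G) : HomeoR) ((((f ^ n)⁻¹ : ↥G) : HomeoR) 0)
            = (((f ^ n) * (f ^ n)⁻¹ : ↥G) : HomeoR) 0 := rfl
          _ = 0 := by rw [mul_inv_cancel]; rfl
      have h2 := ((f ^ n : ↥G) : HomeoR).le_iff_le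
        (x := (((f ^ n)⁻¹ : ↥G) : HomeoR) 0) (y := x)
      rw [← h2, h1]
      exact hn.le
    have hbddF : ∀ x : ℝ, BddAbove (T '' {g : ↥G | (g : HomeoR) 0 ≤ x}) := by
      intro x
      obtain ⟨n, hn⟩ := FAIR.arch hfree hf 0 x
      refine ⟨(n : ℝ), ?_⟩
      rintro _ ⟨g, hg, rfl⟩
      have := Tmono g (f ^ n) (le_of_lt (lt_of_le_of_lt hg hn))
      rw [Tfn n] at this
      exact this
    have hFmono : Monotone F := by
      intro x y hxy
      exact csSup_le_csSup (hbddF y) ((hsetne x).image T)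
        (image_mono (fun g hg => le_trans hg hxy))
    have hFg : ∀ (g : ↥G) (x : ℝ), F ((g : HomeoR) x) = T g + F x := by
      intro g x
      have hset : {h : ↥G | (h : HomeoR) 0 ≤ (g : HomeoR) x}
          = (fun h => g * h) '' {h : ↥G | (h : HomeoR) 0 ≤ x} := by
        ext h
        simp only [Set.mem_setOf_eq, Set.mem_image]
        constructor
        · intro hh
          refine ⟨g⁻¹ * h, ?_, by group⟩
          show ((g⁻¹ * h : ↥G) : HomeoR) 0 ≤ x
          have e1 : ((g⁻¹ * h : ↥G) : HomeoR) 0 = (g : HomeoR).symm ((h : HomeoR) 0) := rfl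
          rw [e1]
          exact (g : HomeoR).symm_apply_le.mpr hh
        · rintro ⟨h', hh', rfl⟩
          show ((g * h' : ↥G) : HomeoR) 0 ≤ (g : HomeoR) x
          have e1 : ((g * h' : ↥G) : HomeoR) 0 = (g : HomeoR) ((h' : HomeoR) 0) := rfl
          rw [e1]
          exact (g : HomeoR).le_iff_le.mpr hh'
      have himg : T '' {h : ↥G | (h : HomeoR) 0 ≤ (g : HomeoR) x}
          = (fun r => T g + r) '' (T '' {h : ↥G | (h : HomeoR) 0 ≤ x}) := by
        rw [hset, ← Set.image_comp, ← Set.image_comp]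
        apply Set.image_congr
        intro h _
        simp only [Function.comp_apply]
        exact Tadd g h
      have hmap := Monotone.map_csSup_of_continuousAt
        (f := fun r : ℝ => T g + r)
        ((continuous_const.add continuous_id).continuousAt)
        (fun a b hab => by simpa using hab)
        ((hsetne x).image T) (hbddF x)
      show sSup (T '' {h : ↥G | (h : HomeoR) 0 ≤ (g : HomeoR) x}) = T g + F x
      rw [himg, ← hmap]
    -- Stieltjes function and measure
    set S : StieltjesFunction ℝ := hFmono.stieltjesFunction with hSdef
    have hSval : ∀ x : ℝ, S x = sInf (F '' Set.Ioi x) := by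
      intro x
      rw [hSdef, hFmono.stieltjesFunction_eq, hFmono.rightLim_eq_sInf]
    have hSbdd : ∀ x : ℝ, BddBelow (F '' Set.Ioi x) := by
      intro x
      refine ⟨F x, ?_⟩
      rintro _ ⟨y, hy, rfl⟩
      exact hFmono (le_of_lt hy)
    have hSg : ∀ (g : ↥G) (x : ℝ), S ((g : HomeoR) x) = T g + S x := by
      intro g x
      rw [hSval, hSval]
      have h1 : Set.Ioi ((g : HomeoR) x) = (g : HomeoR) '' Set.Ioi x :=
        ((g : HomeoR).image_Ioi x).symm
      rw [h1, ← Set.image_comp]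
      have h2 : (F ∘ (g : HomeoR)) '' Set.Ioi x
          = (fun r => T g + r) '' (F '' Set.Ioi x) := by
        rw [← Set.image_comp]
        apply Set.image_congr
        intro y _
        simp only [Function.comp_apply]
        exact hFg g y
      rw [h2]
      have hmap := Monotone.map_csInf_of_continuousAt
        (f := fun r : ℝ => T g + r)
        ((continuous_const.add continuous_id).continuousAt)
        (fun a b hab => by simpa using hab)
        ((Set.nonempty_Ioi).image F) (hSbdd x)
      rw [← hmap]
    refine ⟨S.measure, ?_, inferInstance, ?_⟩
    · -- nonzero
      intro h0
      have h1 : S.measure (Set.Ioc (0:ℝ) ((f : HomeoR) 0)) = ENNReal.ofReal (T f) := by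
        rw [S.measure_Ioc]
        congr 1
        have := hSg f 0
        linarith
      rw [Tf] at h1
      rw [h0] at h1
      simp at h1
    · -- invariance
      intro g hg
      set a : ↥G := ⟨g, hg⟩ with hadef
      have hmeas : Measurable ⇑g := (OrderIso.continuous g).measurable
      have hcoe : (a : HomeoR) = g := rfl
      refine (MeasureTheory.Measure.ext_of_Ioc S.measure (Measure.map (⇑g) S.measure)
        (fun p q hpq => ?_)).symm
      rw [Measure.map_apply hmeas measurableSet_Ioc, g.preimage_Ioc, S.measure_Ioc,
        S.measure_Ioc]
      have hp : S p = T a + S (g.symm p) := by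
        have := hSg a (g.symm p)
        rw [hcoe, g.apply_symm_apply] at this
        exact this
      have hq : S q = T a + S (g.symm q) := by
        have := hSg a (g.symm q)
        rw [hcoe, g.apply_symm_apply] at this
        exact this
      congr 1
      linarith
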